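/- Let n ≥ 2 be an integer and μ ∈ (0,1). If F ∈ M(μ) is supported on finitely many points, then F is not a symmetric equilibrium of the frictionless game: there exists G ∈ M(μ) with u_n(G,F) > 1/n. -/

import Mathlib

open MeasureTheory
open scoped ENNReal

/-- The fair-tie winning probability of one draw from `G` against `n-1` i.i.d. draws from
`F`, with exact ties broken uniformly at random. -/
noncomputable def winProb (n : ℕ) (G F : Measure ℝ) : ℝ :=
  ∫ x, (∑ i ∈ Finset.range n,
      ((n - 1).choose i : ℝ) * ((F {x}).toReal) ^ i * ((F (Set.Ico 0 x)).toReal) ^ (n - 1 - i)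
        / ((i : ℝ) + 1)) ∂G

/-- `F ∈ M(μ)`: a Borel probability measure on `[0,1]` with mean `μ`. -/
def MemM (μ : ℝ) (F : Measure ℝ) : Prop :=
  IsProbabilityMeasure F ∧ F (Set.Icc (0:ℝ) 1)ᶜ = 0 ∧ (∫ x, x ∂F) = μ

lemma choose_sum_eq (n : ℕ) (hn : 1 ≤ n) (q c : ℝ) :
    (n:ℝ) * q * ∑ i ∈ Finset.range n,
        ((n-1).choose i : ℝ) * q ^ i * c ^ (n-1-i) / ((i:ℝ)+1)
      = (c+q)^n - c^n := by
  rw [Finset.mul_sum]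
  have key : ∀ i ∈ Finset.range n,
      (n:ℝ) * q * (((n-1).choose i : ℝ) * q ^ i * c ^ (n-1-i) / ((i:ℝ)+1))
        = (n.choose (i+1) : ℝ) * q ^ (i+1) * c ^ (n-1-i) := by
    intro i _
    have h1 : (n:ℝ) * ((n-1).choose i : ℝ) = (n.choose (i+1) : ℝ) * ((i:ℝ)+1) := by
      have h := Nat.add_one_mul_choose_eq (n-1) i
      rw [Nat.sub_add_cancel hn] at h
      exact_mod_cast congrArg (fun k : ℕ => (k : ℝ)) h
    have hne : ((i:ℝ)+1) ≠ 0 := by positivity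
    field_simp
    linear_combination (q ^ (i+1) * c ^ (n-1-i)) * h1
  rw [Finset.sum_congr rfl key]
  have reflect := Finset.sum_range_reflect
    (fun i => (n.choose (i+1) : ℝ) * q ^ (i+1) * c ^ (n-1-i)) n
  rw [← reflect]
  have key2 : ∀ j ∈ Finset.range n,
      (n.choose ((n-1-j)+1) : ℝ) * q ^ ((n-1-j)+1) * c ^ (n-1-(n-1-j))
        = c ^ j * q ^ (n-j) * (n.choose j : ℝ) := by
    intro j hj
    have hjn : j < n := Finset.mem_range.mp hj
    have e1 : n - 1 - j + 1 = n - j := by omega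
    have e2 : n - 1 - (n-1-j) = j := by omega
    have e3 : n.choose (n - j) = n.choose j := Nat.choose_symm (by omega)
    rw [e1, e2, e3]; ring
  rw [Finset.sum_congr rfl key2]
  have := add_pow c q n
  rw [Finset.sum_range_succ] at this
  simp only [Nat.sub_self, pow_zero, Nat.choose_self, Nat.cast_one, mul_one] at this
  linarith [this]

lemma sum_pow_lt (n : ℕ) (hn : 2 ≤ n) {c q : ℝ} (hc : 0 ≤ c) (hq : 0 < q) :
    (c+q)^n - c^n < (n:ℝ) * q * (c+q)^(n-1) := by
  set x := c + q with hx
  have hcx : c < x := by simp only [hx]; linarith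
  have hx0 : 0 < x := lt_of_le_of_lt hc hcx
  have hsum : ∑ i ∈ Finset.range n, x ^ i * c ^ (n-1-i) < (n:ℝ) * x ^ (n-1) := by
    have hconst : (n:ℝ) * x ^ (n-1) = ∑ _i ∈ Finset.range n, x ^ (n-1) := by
      rw [Finset.sum_const, Finset.card_range, nsmul_eq_mul]
    rw [hconst]
    refine Finset.sum_lt_sum (fun i hi => ?_) ⟨0, Finset.mem_range.mpr (by omega), ?_⟩
    · have hi' : i < n := Finset.mem_range.mp hi
      calc x ^ i * c ^ (n-1-i) ≤ x ^ i * x ^ (n-1-i) :=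
            mul_le_mul_of_nonneg_left (pow_le_pow_left₀ hc hcx.le _) (pow_nonneg hx0.le _)
        _ = x ^ (n-1) := by rw [← pow_add]; congr 1; omega
    · simp only [pow_zero, one_mul, Nat.sub_zero]
      exact pow_lt_pow_left₀ hcx hc (by omega)
  have hgeom := geom_sum₂_mul x c n
  have hxc : x - c = q := by simp [hx]
  calc (c+q)^n - c^n = (∑ i ∈ Finset.range n, x ^ i * c ^ (n-1-i)) * q := by
        rw [← hxc, hgeom]; ring_nf
    _ < ((n:ℝ) * x ^ (n-1)) * q := mul_lt_mul_of_pos_right hsum hq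
    _ = (n:ℝ) * q * (c+q)^(n-1) := by ring

lemma telescope_pow (n : ℕ) (p : ℝ → ℝ) (T : Finset ℝ) :
    ∑ b ∈ T, ((∑ c ∈ T.filter (fun c => c ≤ b), p c)^n
        - (∑ c ∈ T.filter (fun c => c < b), p c)^n)
      = (∑ b ∈ T, p b)^n - (0:ℝ)^n := by
  classical
  induction T using Finset.induction_on_max with
  | empty => simp
  | insert a s ha ih =>
    have has : a ∉ s := fun h => lt_irrefl a (ha a h)
    have e1 : (insert a s).filter (fun c => c ≤ a) = insert a s := by
      apply Finset.filter_true_of_mem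
      intro x hx
      rcases Finset.mem_insert.mp hx with rfl | hx
      · exact le_refl x
      · exact (ha x hx).le
    have e2 : (insert a s).filter (fun c => c < a) = s := by
      ext x
      simp only [Finset.mem_filter, Finset.mem_insert]
      constructor
      · rintro ⟨rfl | hx, hlt⟩
        · exact absurd hlt (lt_irrefl x)
        · exact hx
      · intro hx; exact ⟨Or.inr hx, ha x hx⟩
    have e3 : ∀ b ∈ s, (insert a s).filter (fun c => c ≤ b) = s.filter (fun c => c ≤ b) := by
      intro b hb
      ext x
      simp only [Finset.mem_filter, Finset.mem_insert]
      constructor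
      · rintro ⟨rfl | hx, hle⟩
        · exact absurd (lt_of_le_of_lt hle (ha b hb)) (lt_irrefl x)
        · exact ⟨hx, hle⟩
      · rintro ⟨hx, hle⟩; exact ⟨Or.inr hx, hle⟩
    have e4 : ∀ b ∈ s, (insert a s).filter (fun c => c < b) = s.filter (fun c => c < b) := by
      intro b hb
      ext x
      simp only [Finset.mem_filter, Finset.mem_insert]
      constructor
      · rintro ⟨rfl | hx, hlt⟩
        · exact absurd (lt_trans hlt (ha b hb)) (lt_irrefl x)
        · exact ⟨hx, hlt⟩
      · rintro ⟨hx, hlt⟩; exact ⟨Or.inr hx, hlt⟩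
    have step1 : ∑ x ∈ s, ((∑ c ∈ (insert a s).filter (fun c => c ≤ x), p c)^n
        - (∑ c ∈ (insert a s).filter (fun c => c < x), p c)^n)
        = (∑ b ∈ s, p b)^n - (0:ℝ)^n := by
      rw [← ih]; exact Finset.sum_congr rfl (fun b hb => by rw [e3 b hb, e4 b hb])
    rw [Finset.sum_insert has, e1, e2, step1, Finset.sum_insert has]
    ring

lemma integrable_dirac_real (f : ℝ → ℝ) (b : ℝ) : Integrable f (Measure.dirac b) := by
  have h : f =ᵐ[Measure.dirac b] fun _ => f b := by
    rw [MeasureTheory.ae_dirac_eq]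
    exact Filter.eventually_pure.mpr rfl
  exact (integrable_const (f b)).congr h.symm

lemma integrable_comb {ι : Type*} (s : Finset ι) (c : ι → ℝ≥0∞) (hc : ∀ b ∈ s, c b ≠ ⊤)
    (y : ι → ℝ) (f : ℝ → ℝ) :
    Integrable f (∑ b ∈ s, c b • Measure.dirac (y b)) :=
  integrable_finset_sum_measure.mpr fun b hb =>
    (integrable_dirac_real f (y b)).smul_measure (hc b hb)

lemma integral_comb {ι : Type*} (s : Finset ι) (c : ι → ℝ≥0∞) (hc : ∀ b ∈ s, c b ≠ ⊤)
    (y : ι → ℝ) (f : ℝ → ℝ) :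
    ∫ x, f x ∂(∑ b ∈ s, c b • Measure.dirac (y b)) = ∑ b ∈ s, (c b).toReal * f (y b) := by
  rw [integral_finset_sum_measure
    (fun b hb => (integrable_dirac_real f (y b)).smul_measure (hc b hb))]
  exact Finset.sum_congr rfl fun b _ => by
    rw [integral_smul_measure, integral_dirac, smul_eq_mul]

lemma measure_eq_sum (F : Measure ℝ) (T : Finset ℝ) (hT : F (↑T)ᶜ = 0)
    {E : Set ℝ} (hE : MeasurableSet E) [DecidablePred (· ∈ E)] :
    F E = ∑ b ∈ T.filter (· ∈ E), F {b} := by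
  have hTm : MeasurableSet (↑T : Set ℝ) := T.finite_toSet.measurableSet
  have h0 : F (E \ ↑T) = 0 := measure_mono_null (fun x hx => hx.2) hT
  have h1 : F E = F (E ∩ ↑T) := by
    rw [← measure_inter_add_diff E hTm, h0, add_zero]
  have h2 : E ∩ ↑T = ⋃ b ∈ T.filter (· ∈ E), {b} := by
    ext x
    simp only [Set.mem_inter_iff, Set.mem_iUnion, Finset.mem_filter, Finset.mem_coe,
      Set.mem_singleton_iff]
    constructor
    · rintro ⟨hxE, hxT⟩; exact ⟨x, ⟨hxT, hxE⟩, rfl⟩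
    · rintro ⟨b, ⟨hbT, hbE⟩, rfl⟩; exact ⟨hbE, hbT⟩
  rw [h1, h2, measure_biUnion_finset ?_ fun b _ => measurableSet_singleton b]
  intro i _ j _ hij
  simp only [Function.onFun, Set.disjoint_singleton]
  exact hij

lemma measure_repr (F : Measure ℝ) (T : Finset ℝ) (hT : F (↑T)ᶜ = 0) :
    F = ∑ b ∈ T, F {b} • Measure.dirac b := by
  classical
  apply Measure.ext
  intro E hE
  rw [measure_eq_sum F T hT hE, Measure.finset_sum_apply, Finset.sum_filter]
  exact Finset.sum_congr rfl fun b _ => by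
    rw [Measure.smul_apply, Measure.dirac_apply, smul_eq_mul]
    by_cases h : b ∈ E <;> simp [Set.indicator, h]

/-- If `F ∈ M(μ)` is supported on finitely many points, then `F` is not a
symmetric equilibrium of the frictionless game. -/
theorem stmt_9 (n : ℕ) (hn : 2 ≤ n) (μ : ℝ) (hμ : 0 < μ) (hμ1 : μ < 1)
    (F : Measure ℝ) (hF : MemM μ F)
    (S : Finset ℝ) (hfin : F ((S : Set ℝ))ᶜ = 0) :
    ∃ G : Measure ℝ, MemM μ G ∧ 1 / (n : ℝ) < winProb n G F := by
  classical
  obtain ⟨hFP, hFsupp, hFmean⟩ := hF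
  have hn0 : (0:ℝ) < n := by positivity
  have hfm : ∀ x : ℝ, F {x} ≠ ⊤ := fun x => measure_ne_top F _
  set T : Finset ℝ := S.filter (fun b => F {b} ≠ 0) with hTdef
  have hTnull : F (↑T)ᶜ = 0 := by
    have h := measure_eq_sum F S hfin (E := (↑T : Set ℝ)ᶜ)
      (T.finite_toSet.measurableSet.compl)
    rw [h]
    apply Finset.sum_eq_zero
    intro b hb
    simp only [Finset.mem_filter, Set.mem_compl_iff, Finset.mem_coe] at hb
    by_contra hne
    exact hb.2 (by rw [hTdef]; exact Finset.mem_filter.mpr ⟨hb.1, hne⟩)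
  set p : ℝ → ℝ := fun b => (F {b}).toReal with hpdef
  have hpnn : ∀ b, 0 ≤ p b := fun b => ENNReal.toReal_nonneg
  have hFx0 : ∀ x : ℝ, x ∉ (↑T : Set ℝ) → F {x} = 0 := by
    intro x hx
    exact measure_mono_null (fun z hz => by simp only [Set.mem_singleton_iff] at hz; subst hz; exact hx) hTnull
  have hpos : ∀ b ∈ T, 0 < p b := by
    intro b hb
    have hb' := Finset.mem_filter.mp (hTdef ▸ hb)
    exact ENNReal.toReal_pos hb'.2 (hfm b)
  have hTsub : ∀ b ∈ T, b ∈ Set.Icc (0:ℝ) 1 := by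
    intro b hb
    by_contra hmem
    have h0 : F {b} = 0 :=
      measure_mono_null (fun z hz => by simp only [Set.mem_singleton_iff] at hz; subst hz; exact hmem) hFsupp
    have hb' := Finset.mem_filter.mp (hTdef ▸ hb)
    exact hb'.2 h0
  have hsum1' : ∑ b ∈ T, F {b} = 1 := by
    have h := measure_eq_sum F T hTnull (E := Set.univ) MeasurableSet.univ
    rw [Finset.filter_true_of_mem (fun _ _ => Set.mem_univ _)] at h
    rw [← h, measure_univ]
  have hpsum : ∑ b ∈ T, p b = 1 := by
    have := ENNReal.toReal_sum (s := T) (f := fun b => F {b}) (fun b _ => hfm b)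
    rw [hsum1'] at this
    simpa using this.symm
  set cb : ℝ → ℝ := fun x => ∑ c ∈ T.filter (fun c => c < x), p c with hcbdef
  have hcbnn : ∀ x, 0 ≤ cb x := fun x => Finset.sum_nonneg (fun c _ => hpnn c)
  have hC : ∀ x : ℝ, (F (Set.Ico 0 x)).toReal = cb x := by
    intro x
    have h := measure_eq_sum F T hTnull (E := Set.Ico 0 x) measurableSet_Ico
    have hfilter : T.filter (fun b => b ∈ Set.Ico (0:ℝ) x) = T.filter (fun c => c < x) := by
      ext b
      simp only [Finset.mem_filter, Set.mem_Ico]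
      constructor
      · rintro ⟨hb, _, hlt⟩; exact ⟨hb, hlt⟩
      · rintro ⟨hb, hlt⟩; exact ⟨hb, (hTsub b hb).1, hlt⟩
    rw [hfilter] at h
    rw [h, ENNReal.toReal_sum (fun b _ => hfm b)]
  have hcp : ∀ b ∈ T, ∑ c ∈ T.filter (fun c => c ≤ b), p c = cb b + p b := by
    intro b hb
    have hins : T.filter (fun c => c ≤ b) = insert b (T.filter (fun c => c < b)) := by
      ext x
      simp only [Finset.mem_filter, Finset.mem_insert]
      constructor
      · rintro ⟨hx, hle⟩
        rcases lt_or_eq_of_le hle with hlt | rfl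
        · exact Or.inr ⟨hx, hlt⟩
        · exact Or.inl rfl
      · rintro (rfl | ⟨hx, hlt⟩)
        · exact ⟨hb, le_refl x⟩
        · exact ⟨hx, hlt.le⟩
    rw [hins, Finset.sum_insert (by simp)]
    rw [hcbdef]; ring
  -- mean as a sum
  have hrepr := measure_repr F T hTnull
  have hmean : ∑ b ∈ T, p b * b = μ := by
    have h1 := integral_comb T (fun b => F {b}) (fun b _ => hfm b) (fun b => b) (fun x => x)
    rw [← hrepr] at h1
    rw [← hFmean]
    exact h1.symm
  set T' : Finset ℝ := T.filter (fun b => b < 1) with hT'def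
  have hT'T : ∀ b ∈ T', b ∈ T := fun b hb => (Finset.mem_filter.mp hb).1
  have hT'lt : ∀ b ∈ T', b < 1 := fun b hb => (Finset.mem_filter.mp hb).2
  have hT'ne : T'.Nonempty := by
    by_contra h
    rw [Finset.not_nonempty_iff_eq_empty] at h
    have hall : ∀ b ∈ T, b = 1 := by
      intro b hb
      refine le_antisymm (hTsub b hb).2 ?_
      by_contra hlt
      have hbT' : b ∈ T' := by exact Finset.mem_filter.mpr ⟨hb, not_le.mp hlt⟩
      rw [h] at hbT'
      exact absurd hbT' (Finset.notMem_empty b)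
    have hμ1' : μ = 1 := by
      rw [← hmean]
      calc ∑ b ∈ T, p b * b = ∑ b ∈ T, p b :=
            Finset.sum_congr rfl (fun b hb => by rw [hall b hb, mul_one])
        _ = 1 := hpsum
    linarith
  set Nset : ℝ → Finset ℝ := fun b => (insert (1:ℝ) T).filter (fun c => b < c) with hNsetdef
  set N : ℝ → ℝ := fun b => if h : (Nset b).Nonempty then (Nset b).min' h else 2 with hNdef
  set g : ℝ → ℝ := fun b => (N b - b)/2 with hgdef
  have hNprop : ∀ b ∈ T', b < N b ∧ N b ≤ 1 ∧ ∀ c ∈ T, b < c → N b ≤ c := by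
    intro b hb
    have hb1 : b < 1 := hT'lt b hb
    have hne : (Nset b).Nonempty :=
      ⟨1, by exact Finset.mem_filter.mpr ⟨Finset.mem_insert_self 1 T, hb1⟩⟩
    have hN : N b = (Nset b).min' hne := dif_pos hne
    have hmem := (Nset b).min'_mem hne
    rw [← hN] at hmem
    obtain ⟨hm1, hm2⟩ := Finset.mem_filter.mp hmem
    refine ⟨hm2, ?_, ?_⟩
    · rcases Finset.mem_insert.mp hm1 with h1 | hT2
      · exact le_of_eq h1
      · exact (hTsub _ hT2).2
    · intro c hc hbc
      have hcmem : c ∈ Nset b := by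
        exact Finset.mem_filter.mpr ⟨Finset.mem_insert_of_mem hc, hbc⟩
      rw [hN]
      exact Finset.min'_le _ c hcmem
  have hg : ∀ b ∈ T', 0 < g b := by
    intro b hb
    have := (hNprop b hb).1
    rw [hgdef]
    simp only
    linarith
  set Δ : ℝ := ∑ b ∈ T', p b * g b with hΔdef
  have hΔ : 0 < Δ := by
    rw [hΔdef]
    exact Finset.sum_pos (fun b hb => mul_pos (hpos b (hT'T b hb)) (hg b hb)) hT'ne
  set w : ℝ → ℝ := fun b =>
    if b < 1 then p b * (cb b + p b)^(n-1) else ((cb b + p b)^n - (cb b)^n)/(n:ℝ) with hwdef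
  set W : ℝ := ∑ b ∈ T, w b with hWdef
  have hu : ∑ b ∈ T, ((cb b + p b)^n - (cb b)^n)/(n:ℝ) = 1/(n:ℝ) := by
    rw [← Finset.sum_div]
    congr 1
    have tel := telescope_pow n p T
    calc ∑ b ∈ T, ((cb b + p b)^n - (cb b)^n)
        = ∑ b ∈ T, ((∑ c ∈ T.filter (fun c => c ≤ b), p c)^n
            - (∑ c ∈ T.filter (fun c => c < b), p c)^n) :=
          Finset.sum_congr rfl (fun b hb => by rw [hcp b hb, hcbdef])
      _ = (∑ b ∈ T, p b)^n - (0:ℝ)^n := tel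
      _ = 1 := by rw [hpsum, one_pow, zero_pow (by omega : n ≠ 0)]; ring
  have hstrict : ∀ b ∈ T, b < 1 → ((cb b + p b)^n - (cb b)^n)/(n:ℝ) < w b := by
    intro b hb hb1
    rw [hwdef]
    simp only [if_pos hb1]
    rw [div_lt_iff₀ hn0]
    have h2 := sum_pow_lt n hn (hcbnn b) (hpos b hb)
    linarith [h2]
  have hW : 1/(n:ℝ) < W := by
    rw [← hu, hWdef]
    refine Finset.sum_lt_sum (fun b hb => ?_) ?_
    · by_cases hb1 : b < 1
      · exact (hstrict b hb hb1).le
      · rw [hwdef]; simp only [if_neg hb1]; exact le_refl _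
    · obtain ⟨b₀, hb₀⟩ := hT'ne
      exact ⟨b₀, hT'T b₀ hb₀, hstrict b₀ (hT'T b₀ hb₀) (hT'lt b₀ hb₀)⟩
  have hWpos : 0 < W := lt_trans (by positivity) hW
  have hnW : 0 < μ * ((n:ℝ) * W - 1) := by
    apply mul_pos hμ
    rw [sub_pos]
    calc (1:ℝ) = n * (1/n) := by field_simp
      _ < n * W := by exact mul_lt_mul_of_pos_left hW hn0
  set ε : ℝ := min 1 (μ * ((n:ℝ) * W - 1)/(2*Δ)) with hεdef
  have hε0 : 0 < ε := lt_min one_pos (by positivity)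
  have hε1 : ε ≤ 1 := min_le_left _ _
  have hεΔ : ε * Δ < μ * ((n:ℝ)*W - 1) := by
    have h1 : ε ≤ μ * ((n:ℝ) * W - 1)/(2*Δ) := min_le_right _ _
    have h2 : ε * Δ ≤ (μ * ((n:ℝ) * W - 1)/(2*Δ)) * Δ :=
      mul_le_mul_of_nonneg_right h1 hΔ.le
    have h3 : (μ * ((n:ℝ) * W - 1)/(2*Δ)) * Δ = μ * ((n:ℝ) * W - 1)/2 := by
      field_simp
    rw [h3] at h2
    linarith
  set y : ℝ → ℝ := fun b => if b < 1 then b + ε * g b else b with hydef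
  have hylt : ∀ b ∈ T', b < y b ∧ y b < N b := by
    intro b hb
    have hb1 : b < 1 := hT'lt b hb
    have hgb := hg b hb
    have hN := (hNprop b hb).1
    have hyb : y b = b + ε * g b := if_pos hb1
    constructor
    · rw [hyb]; nlinarith [mul_pos hε0 hgb]
    · rw [hyb]
      have h5 : ε * g b ≤ g b := by nlinarith [mul_le_mul_of_nonneg_right hε1 hgb.le]
      have hgN : g b = (N b - b)/2 := by rw [hgdef]
      have h6 : g b < N b - b := by rw [hgN]; linarith
      linarith
  have hyIcc : ∀ b ∈ T, y b ∈ Set.Icc (0:ℝ) 1 := by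
    intro b hb
    by_cases hb1 : b < 1
    · have hbT' : b ∈ T' := Finset.mem_filter.mpr ⟨hb, hb1⟩
      obtain ⟨h1, h2⟩ := hylt b hbT'
      have hN1 := (hNprop b hbT').2.1
      exact ⟨le_trans (hTsub b hb).1 h1.le, le_trans h2.le hN1⟩
    · have : y b = b := if_neg hb1
      rw [this]; exact hTsub b hb
  have hynotT : ∀ b ∈ T', y b ∉ (↑T : Set ℝ) := by
    intro b hb hmem
    obtain ⟨h1, h2⟩ := hylt b hb
    have := (hNprop b hb).2.2 (y b) hmem h1
    linarith
  have hcy : ∀ b ∈ T', cb (y b) = cb b + p b := by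
    intro b hb
    have hbT := hT'T b hb
    rw [← hcp b hbT]
    have hfil : T.filter (fun c => c < y b) = T.filter (fun c => c ≤ b) := by
      ext c
      simp only [Finset.mem_filter]
      constructor
      · rintro ⟨hc, hlt⟩
        refine ⟨hc, ?_⟩
        by_contra hle
        have hbc : b < c := not_le.mp hle
        have := (hNprop b hb).2.2 c hc hbc
        have := (hylt b hb).2
        linarith
      · rintro ⟨hc, hle⟩
        exact ⟨hc, lt_of_le_of_lt hle (hylt b hb).1⟩
    calc cb (y b) = ∑ c ∈ T.filter (fun c => c < y b), p c := by rw [hcbdef]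
      _ = ∑ c ∈ T.filter (fun c => c ≤ b), p c := by rw [hfil]
  set hh : ℝ → ℝ := fun x => ∑ i ∈ Finset.range n,
      ((n - 1).choose i : ℝ) * ((F {x}).toReal) ^ i * ((F (Set.Ico 0 x)).toReal) ^ (n - 1 - i)
        / ((i : ℝ) + 1) with hhdef
  have hhnn : ∀ x, 0 ≤ hh x := by
    intro x
    apply Finset.sum_nonneg
    intro i _
    positivity
  have hhval1 : ∀ b ∈ T', hh (y b) = (cb b + p b)^(n-1) := by
    intro b hb
    have hF0 : (F {y b}).toReal = 0 := by rw [hFx0 (y b) (hynotT b hb)]; simp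
    have hFC : (F (Set.Ico 0 (y b))).toReal = cb b + p b := by rw [hC, hcy b hb]
    rw [hhdef]
    simp only [hF0, hFC]
    rw [Finset.sum_eq_single_of_mem 0 (Finset.mem_range.mpr (by omega : 0 < n))
      (fun i _ hne => by rw [zero_pow hne]; ring)]
    norm_num
  have hhval2 : ∀ b ∈ T, ¬ b < 1 → p b * hh (y b) = ((cb b + p b)^n - (cb b)^n)/(n:ℝ) := by
    intro b hb hb1
    have hyb : y b = b := if_neg hb1
    have hkey := choose_sum_eq n (by omega) (p b) (cb b)
    have hhb : hh b = ∑ i ∈ Finset.range n,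
        ((n - 1).choose i : ℝ) * (p b) ^ i * (cb b) ^ (n - 1 - i) / ((i : ℝ) + 1) := by
      rw [hhdef]
      simp only [hC b]
      rfl
    rw [hyb, hhb, eq_div_iff (ne_of_gt hn0)]
    linear_combination hkey
  set G₀ : Measure ℝ := ∑ b ∈ T, F {b} • Measure.dirac (y b) with hG₀def
  have hden : (0:ℝ) < μ + ε*Δ := by positivity
  set t₁ : ℝ := μ / (μ + ε*Δ) with ht₁def
  set t₂ : ℝ := (ε*Δ) / (μ + ε*Δ) with ht₂def
  have ht₁ : 0 < t₁ := by rw [ht₁def]; positivity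
  have ht₂ : 0 < t₂ := by rw [ht₂def]; positivity
  have ht12 : t₁ + t₂ = 1 := by rw [ht₁def, ht₂def, ← add_div, div_self hden.ne']
  set G : Measure ℝ := ENNReal.ofReal t₁ • G₀ + ENNReal.ofReal t₂ • Measure.dirac 0 with hGdef
  have hG₀univ : G₀ Set.univ = 1 := by
    rw [hG₀def, Measure.finset_sum_apply]
    calc ∑ b ∈ T, (F {b} • Measure.dirac (y b)) Set.univ
        = ∑ b ∈ T, F {b} := Finset.sum_congr rfl (fun b _ => by
          rw [Measure.smul_apply, measure_univ, smul_eq_mul, mul_one])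
      _ = 1 := hsum1'
  have hInt : ∀ f : ℝ → ℝ, ∫ x, f x ∂G = t₁ * (∑ b ∈ T, p b * f (y b)) + t₂ * f 0 := by
    intro f
    have hIf1 : Integrable f (ENNReal.ofReal t₁ • G₀) := by
      rw [hG₀def]
      exact (integrable_comb T (fun b => F {b}) (fun b _ => hfm b) y f).smul_measure
        ENNReal.ofReal_ne_top
    have hIf2 : Integrable f (ENNReal.ofReal t₂ • Measure.dirac 0) :=
      (integrable_dirac_real f 0).smul_measure ENNReal.ofReal_ne_top
    rw [hGdef, integral_add_measure hIf1 hIf2, integral_smul_measure, integral_smul_measure,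
      integral_dirac, ENNReal.toReal_ofReal ht₁.le, ENNReal.toReal_ofReal ht₂.le,
      hG₀def, integral_comb T (fun b => F {b}) (fun b _ => hfm b) y f]
    simp only [smul_eq_mul, hpdef]
  have hymean : ∑ b ∈ T, p b * y b = μ + ε*Δ := by
    have hsplit : ∀ b ∈ T, p b * y b = p b * b + (if b < 1 then p b * (ε * g b) else 0) := by
      intro b _
      by_cases hb1 : b < 1
      · rw [hydef]; simp only [if_pos hb1]; ring
      · rw [hydef]; simp only [if_neg hb1]; ring
    rw [Finset.sum_congr rfl hsplit, Finset.sum_add_distrib, hmean, ← Finset.sum_filter]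
    congr 1
    rw [hΔdef, Finset.mul_sum]
    exact Finset.sum_congr rfl (fun b _ => by ring)
  refine ⟨G, ⟨?_, ?_, ?_⟩, ?_⟩
  · constructor
    rw [hGdef, Measure.add_apply, Measure.smul_apply, Measure.smul_apply, hG₀univ,
      measure_univ, smul_eq_mul, smul_eq_mul, mul_one, mul_one,
      ← ENNReal.ofReal_add ht₁.le ht₂.le, ht12, ENNReal.ofReal_one]
  · have hd : ∀ z : ℝ, z ∈ Set.Icc (0:ℝ) 1 → Measure.dirac z (Set.Icc (0:ℝ) 1)ᶜ = 0 := by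
      intro z hz
      rw [Measure.dirac_apply]
      exact Set.indicator_of_notMem (by simp [hz]) _
    rw [hGdef, Measure.add_apply, Measure.smul_apply, Measure.smul_apply, hG₀def,
      Measure.finset_sum_apply]
    have hzero : ∑ b ∈ T, (F {b} • Measure.dirac (y b)) (Set.Icc (0:ℝ) 1)ᶜ = 0 := by
      apply Finset.sum_eq_zero
      intro b hb
      rw [Measure.smul_apply, hd (y b) (hyIcc b hb), smul_eq_mul, mul_zero]
    rw [hzero, hd 0 (by constructor <;> norm_num)]
    simp
  · have h2 : (∫ x, x ∂G) = t₁ * (∑ b ∈ T, p b * y b) + t₂ * 0 := hInt (fun x => x)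
    rw [hymean] at h2
    rw [h2, mul_zero, add_zero, ht₁def]
    exact div_mul_cancel₀ μ hden.ne'
  · show (1:ℝ)/(n:ℝ) < ∫ x, hh x ∂G
    rw [hInt hh]
    have hWsum : ∑ b ∈ T, p b * hh (y b) = W := by
      rw [hWdef]
      refine Finset.sum_congr rfl (fun b hb => ?_)
      by_cases hb1 : b < 1
      · rw [hwdef]; simp only [if_pos hb1]
        rw [hhval1 b (Finset.mem_filter.mpr ⟨hb, hb1⟩)]
      · rw [hwdef]; simp only [if_neg hb1]
        exact hhval2 b hb hb1
    rw [hWsum]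
    have hlow : 1/(n:ℝ) < t₁ * W := by
      rw [ht₁def, div_mul_eq_mul_div, div_lt_div_iff₀ hn0 hden]
      linarith [hεΔ]
    exact lt_of_lt_of_le hlow (le_add_of_nonneg_right (mul_nonneg ht₂.le (hhnn 0)))
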